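/- Let G and H be closed subgroups of S∞ and let α ∈ S∞. Then αGα⁻¹ = H if and only if for every n ≥ 1 and all tuples x, y ∈ ℕⁿ: x and y lie in the same orbit of the coordinatewise action of G on ℕⁿ if and only if α∘x and α∘y lie in the same orbit of the coordinatewise action of H on ℕⁿ. -/

import Mathlib

open Topology

/-- `S∞`: the group of permutations of `ℕ` with the topology of pointwise convergence,
induced by `σ ↦ (σ, σ⁻¹)` from the product topology on `(ℕ → ℕ) × (ℕ → ℕ)`. -/
instance permTop : TopologicalSpace (Equiv.Perm ℕ) :=
  TopologicalSpace.induced (fun σ => ((⇑σ, ⇑σ.symm) : (ℕ → ℕ) × (ℕ → ℕ))) inferInstance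

lemma mem_of_agree (H : Subgroup (Equiv.Perm ℕ)) (hH : IsClosed (H : Set (Equiv.Perm ℕ)))
    (β : Equiv.Perm ℕ)
    (hyp : ∀ n : ℕ, ∃ h ∈ H, (∀ k ≤ n, h k = β k) ∧ (∀ k ≤ n, h (β.symm k) = k)) :
    β ∈ H := by
  choose f hfH h1 h2 using hyp
  have hinv : ∀ n, ∀ k ≤ n, (f n).symm k = β.symm k := by
    intro n k hk
    exact (f n).symm_apply_eq.mpr (h2 n k hk).symm
  have ht : Filter.Tendsto f Filter.atTop (𝓝 β) := by
    rw [nhds_induced (fun σ : Equiv.Perm ℕ => ((⇑σ, ⇑σ.symm) : (ℕ → ℕ) × (ℕ → ℕ))) β,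
      Filter.tendsto_comap_iff]
    rw [nhds_prod_eq]
    apply Filter.Tendsto.prodMk
    · rw [tendsto_pi_nhds]
      intro k
      apply tendsto_nhds_of_eventually_eq
      filter_upwards [Filter.eventually_ge_atTop k] with n hn
      exact h1 n k hn
    · rw [tendsto_pi_nhds]
      intro k
      apply tendsto_nhds_of_eventually_eq
      filter_upwards [Filter.eventually_ge_atTop k] with n hn
      exact hinv n k hn
  exact hH.mem_of_tendsto ht (Filter.Eventually.of_forall hfH)

/-- closed subgroups `G`, `H` of `S∞` are conjugate via `α` iff `α` is an
isomorphism of the orbit equivalence structures. -/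
theorem stmt19 (G H : Subgroup (Equiv.Perm ℕ))
    (hG : IsClosed (G : Set (Equiv.Perm ℕ))) (hH : IsClosed (H : Set (Equiv.Perm ℕ)))
    (α : Equiv.Perm ℕ) :
    (∀ g : Equiv.Perm ℕ, g ∈ G ↔ α * g * α⁻¹ ∈ H) ↔
    (∀ n : ℕ, 1 ≤ n → ∀ x y : Fin n → ℕ,
      ((∃ g ∈ G, ∀ i, g (x i) = y i) ↔ (∃ h ∈ H, ∀ i, h (α (x i)) = α (y i)))) := by
  constructor
  · intro hconj n _ x y
    constructor
    · rintro ⟨g, hg, hxy⟩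
      refine ⟨α * g * α⁻¹, (hconj g).mp hg, fun i => ?_⟩
      simp [Equiv.Perm.mul_apply, hxy i]
    · rintro ⟨h, hh, hxy⟩
      refine ⟨α⁻¹ * h * α, ?_, fun i => ?_⟩
      · have : α * (α⁻¹ * h * α) * α⁻¹ = h := by group
        exact (hconj _).mpr (by rw [this]; exact hh)
      · simp only [Equiv.Perm.mul_apply]
        rw [hxy i]
        simp
  · intro horb g
    constructor
    · intro hg
      apply mem_of_agree H hH
      intro n
      set x : Fin (2 * n + 2) → ℕ := fun i =>
        if h : i.val ≤ n then α.symm i.val else g.symm (α.symm (i.val - (n + 1))) with hx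
      have hGside : ∃ g' ∈ G, ∀ i, g' (x i) = g (x i) := ⟨g, hg, fun _ => rfl⟩
      obtain ⟨h, hh, hmap⟩ := (horb (2 * n + 2) (by omega) x (fun i => g (x i))).mp hGside
      refine ⟨h, hh, fun k hk => ?_, fun k hk => ?_⟩
      · have := hmap ⟨k, by omega⟩
        simp only [hx] at this
        rw [dif_pos (by simpa using hk)] at this
        simpa [Equiv.Perm.mul_apply] using this
      · have := hmap ⟨n + 1 + k, by omega⟩
        simp only [hx] at this
        rw [dif_neg (by simp; omega)] at this
        have harith : n + 1 + k - (n + 1) = k := by omega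
        rw [harith] at this
        show h (α (g.symm (α.symm k))) = k
        simpa [Equiv.Perm.mul_apply] using this
    · intro hh
      apply mem_of_agree G hG
      intro n
      set x : Fin (2 * n + 2) → ℕ := fun i =>
        if h : i.val ≤ n then i.val else g.symm (i.val - (n + 1)) with hx
      have hHside : ∃ h' ∈ H, ∀ i, h' (α (x i)) = α (g (x i)) :=
        ⟨α * g * α⁻¹, hh, fun i => by simp [Equiv.Perm.mul_apply]⟩
      obtain ⟨g', hg', hmap⟩ := (horb (2 * n + 2) (by omega) x (fun i => g (x i))).mpr hHside
      refine ⟨g', hg', fun k hk => ?_, fun k hk => ?_⟩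
      · have := hmap ⟨k, by omega⟩
        simp only [hx] at this
        rw [dif_pos (by simpa using hk)] at this
        simpa using this
      · have := hmap ⟨n + 1 + k, by omega⟩
        simp only [hx] at this
        rw [dif_neg (by simp; omega)] at this
        have harith : n + 1 + k - (n + 1) = k := by omega
        rw [harith] at this
        simpa using this
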